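/- Let M and A be sets, let X be a nonempty finite set of functions from M to A, and let rk_X be the relational diversity rank function induced by X. Then for all finite x, y ⊆ M: rk_X(x ∪ y) = rk_X(x) + rk_X(y) if and only if for all s, s' ∈ X there exists s'' ∈ X such that s'' agrees with s on every element of x and agrees with s' on every element of y. -/
import Mathlib


/-- The relational diversity rank induced by a team `X` of assignments `α → β`:
`rk_X(x) = log₂ |{s↾x : s ∈ X}|`. -/
noncomputable def relRank {α : Type*} {β : Type*} (X : Finset (α → β)) (x : Finset α) : ℝ :=
  Real.logb 2 (Set.ncard ((↑x : Set α).restrict '' (↑X : Set (α → β))))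

theorem relRank_indep_iff {α : Type*} {β : Type*} [DecidableEq α]
    (X : Finset (α → β)) (hX : X.Nonempty) (x y : Finset α) :
    relRank X (x ∪ y) = relRank X x + relRank X y ↔
      ∀ s ∈ X, ∀ s' ∈ X, ∃ s'' ∈ X,
        (∀ a ∈ x, s'' a = s a) ∧ (∀ a ∈ y, s'' a = s' a) := by
  classical
  set Sxy := ((↑(x ∪ y) : Set α).restrict '' (↑X : Set (α → β))) with hSxy
  set Sx := ((↑x : Set α).restrict '' (↑X : Set (α → β))) with hSx
  set Sy := ((↑y : Set α).restrict '' (↑X : Set (α → β))) with hSy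
  have hfinX : (↑X : Set (α → β)).Finite := X.finite_toSet
  have hfxy : Sxy.Finite := hfinX.image _
  have hfx : Sx.Finite := hfinX.image _
  have hfy : Sy.Finite := hfinX.image _
  obtain ⟨s0, hs0⟩ := hX
  have hposxy : 0 < Sxy.ncard := (Set.ncard_pos hfxy).2 ⟨_, ⟨s0, hs0, rfl⟩⟩
  have hposx : 0 < Sx.ncard := (Set.ncard_pos hfx).2 ⟨_, ⟨s0, hs0, rfl⟩⟩
  have hposy : 0 < Sy.ncard := (Set.ncard_pos hfy).2 ⟨_, ⟨s0, hs0, rfl⟩⟩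
  -- the comparison map
  set f : ((↑(x ∪ y) : Set α) → β) → ((↑x : Set α) → β) × ((↑y : Set α) → β) :=
    fun g => (fun a => g ⟨a.1, by simp only [Finset.coe_union, Set.mem_union]; exact Or.inl a.2⟩,
              fun a => g ⟨a.1, by simp only [Finset.coe_union, Set.mem_union]; exact Or.inr a.2⟩) with hf
  have hinj : Function.Injective f := by
    intro g g' h
    funext a
    obtain ⟨a, ha⟩ := a
    have ha' : a ∈ x ∨ a ∈ y := by simpa [Finset.mem_union] using ha
    rcases ha' with h1 | h1
    · exact congrFun (congrArg Prod.fst h) ⟨a, h1⟩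
    · exact congrFun (congrArg Prod.snd h) ⟨a, h1⟩
  have himg : f '' Sxy ⊆ Sx ×ˢ Sy := by
    rintro - ⟨-, ⟨s, hs, rfl⟩, rfl⟩
    exact ⟨⟨s, hs, rfl⟩, ⟨s, hs, rfl⟩⟩
  have hcardim : (f '' Sxy).ncard = Sxy.ncard := Set.ncard_image_of_injective _ hinj
  have hcardprod : (Sx ×ˢ Sy).ncard = Sx.ncard * Sy.ncard := by
    rw [← Nat.card_coe_set_eq, ← Nat.card_coe_set_eq, ← Nat.card_coe_set_eq,
      Nat.card_congr (Equiv.Set.prod _ _), Nat.card_prod]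
  -- reduce the log statement to a cardinality statement
  have hlog : relRank X (x ∪ y) = relRank X x + relRank X y ↔
      Sxy.ncard = Sx.ncard * Sy.ncard := by
    unfold relRank
    rw [← hSxy, ← hSx, ← hSy,
      ← Real.logb_mul (by exact_mod_cast hposx.ne') (by exact_mod_cast hposy.ne')]
    constructor
    · intro h
      have := Real.logb_injOn_pos (b := 2) (by norm_num)
        (Set.mem_Ioi.2 (by exact_mod_cast hposxy))
        (Set.mem_Ioi.2 (by positivity)) h
      exact_mod_cast this
    · intro h; rw [h]; push_cast; ring_nf
  rw [hlog]
  constructor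
  · -- cardinality equality ⇒ amalgamation
    intro h s hs s' hs'
    have heq : f '' Sxy = Sx ×ˢ Sy :=
      Set.eq_of_subset_of_ncard_le himg (by rw [hcardim, hcardprod, h]) (hfx.prod hfy)
    have hmem : ((↑x : Set α).restrict s, (↑y : Set α).restrict s') ∈ f '' Sxy := by
      rw [heq]; exact ⟨⟨s, hs, rfl⟩, ⟨s', hs', rfl⟩⟩
    obtain ⟨-, ⟨s'', hs'', rfl⟩, hfeq⟩ := hmem
    refine ⟨s'', hs'', fun a ha => ?_, fun a ha => ?_⟩
    · exact congrFun (congrArg Prod.fst hfeq) ⟨a, ha⟩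
    · exact congrFun (congrArg Prod.snd hfeq) ⟨a, ha⟩
  · -- amalgamation ⇒ cardinality equality
    intro h
    have hsub : Sx ×ˢ Sy ⊆ f '' Sxy := by
      rintro ⟨u, v⟩ ⟨⟨s, hs, rfl⟩, ⟨s', hs', rfl⟩⟩
      obtain ⟨s'', hs'', h1, h2⟩ := h s hs s' hs'
      refine ⟨(↑(x ∪ y) : Set α).restrict s'', ⟨s'', hs'', rfl⟩, ?_⟩
      refine Prod.ext (funext fun a => ?_) (funext fun a => ?_)
      · exact h1 a.1 a.2
      · exact h2 a.1 a.2
    have heq : f '' Sxy = Sx ×ˢ Sy := Set.Subset.antisymm himg hsub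
    rw [← hcardim, heq, hcardprod]
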